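/- Let a ∈ ℤ^n with 1 ≤ a_i ≤ Δ for all i, let β ∈ ℤ_{≥0} and c ∈ ℤ^n, and let P = {x ∈ ℝ^n : a^T x = β, x ≥ 0}. Suppose P contains an integer point, let x* ∈ P satisfy c^T x* ≥ c^T x for all x ∈ P, and let z* ∈ P ∩ ℤ^n satisfy c^T z* ≥ c^T z for all z ∈ P ∩ ℤ^n. Then c^T x* − c^T z* ≤ 2 · ‖c‖_∞ · Δ. -/
import Mathlib

open Finset

/-- Pigeonhole on prefix sums: from a multiset (given by multiplicities `w`) of total
size at least `d > 0`, one can extract a nonempty sub-multiset `t` whose `a`-weight is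
divisible by `d`. -/
lemma knapsack_aux_exists (n : ℕ) (d : ℤ) (hd : 0 < d) (a w : Fin n → ℤ)
    (hw : ∀ i, 0 ≤ w i) (hD : d ≤ ∑ i, w i) :
    ∃ t : Fin n → ℤ, (∀ i, 0 ≤ t i) ∧ (∀ i, t i ≤ w i) ∧ 0 < ∑ i, t i ∧
      d ∣ ∑ i, a i * t i := by
  classical
  set D : ℤ := ∑ i, w i with hDdef
  set w' : ℕ → ℤ := fun k => if h : k < n then w ⟨k, h⟩ else 0 with hw'
  have hwval : ∀ i : Fin n, w' i.val = w i := by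
    intro i
    simp [hw', i.isLt]
  have hw0 : ∀ k, 0 ≤ w' k := by
    intro k
    simp only [hw']
    split
    · exact hw _
    · exact le_rfl
  set W : ℕ → ℤ := fun k => ∑ i ∈ Finset.range k, w' i with hWdef
  have hWs : ∀ k, W (k + 1) = W k + w' k := fun k => Finset.sum_range_succ w' k
  have hW0 : W 0 = 0 := Finset.sum_range_zero w'
  have hWn : W n = D := by
    calc W n = ∑ k ∈ Finset.range n, w' k := rfl
      _ = ∑ i : Fin n, w' i.val := (Fin.sum_univ_eq_sum_range w' n).symm
      _ = ∑ i, w i := Finset.sum_congr rfl fun i _ => hwval i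
  set g : ℤ → ℕ → ℤ := fun r k => min r (W (k + 1)) - min r (W k) with hg
  have hsum : ∀ r : ℤ, 0 ≤ r → r ≤ D → ∑ i : Fin n, g r i.val = r := by
    intro r h0 h1
    calc ∑ i : Fin n, g r i.val = ∑ k ∈ Finset.range n, g r k :=
          Fin.sum_univ_eq_sum_range (g r) n
      _ = min r (W n) - min r (W 0) := Finset.sum_range_sub (fun k => min r (W k)) n
      _ = r := by rw [hWn, hW0]; omega
  have claim : ∀ r s : ℤ, r ∈ Finset.Icc (0:ℤ) d → s ∈ Finset.Icc (0:ℤ) d → r < s →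
      (∑ i : Fin n, a i * g r i.val) % d = (∑ i : Fin n, a i * g s i.val) % d →
      (∃ t : Fin n → ℤ, (∀ i, 0 ≤ t i) ∧ (∀ i, t i ≤ w i) ∧ 0 < ∑ i, t i ∧
        d ∣ ∑ i, a i * t i) := by
    intro r s hr hs hlt he
    rw [Finset.mem_Icc] at hr hs
    have hrD : r ≤ D := le_trans hr.2 hD
    have hsD : s ≤ D := le_trans hs.2 hD
    refine ⟨fun i => g s i.val - g r i.val, ?_, ?_, ?_, ?_⟩
    · intro i
      have h1 := hWs i.val
      have h2 := hw0 i.val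
      show 0 ≤ (min s (W (i.val + 1)) - min s (W i.val)) -
        (min r (W (i.val + 1)) - min r (W i.val))
      omega
    · intro i
      have h1 := hWs i.val
      have h2 := hw0 i.val
      have h3 := hwval i
      show (min s (W (i.val + 1)) - min s (W i.val)) -
        (min r (W (i.val + 1)) - min r (W i.val)) ≤ w i
      omega
    · rw [Finset.sum_sub_distrib, hsum s hs.1 hsD, hsum r hr.1 hrD]
      omega
    · have h2 : d ∣ (∑ i : Fin n, a i * g s i.val) - (∑ i : Fin n, a i * g r i.val) :=
        Int.ModEq.dvd he
      have h3 : ∑ i : Fin n, a i * (g s i.val - g r i.val) =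
          (∑ i : Fin n, a i * g s i.val) - (∑ i : Fin n, a i * g r i.val) := by
        rw [← Finset.sum_sub_distrib]
        exact Finset.sum_congr rfl fun i _ => by ring
      rw [h3]
      exact h2
  have hmaps : ∀ r ∈ Finset.Icc (0:ℤ) d,
      (∑ i : Fin n, a i * g r i.val) % d ∈ Finset.Ico (0:ℤ) d := by
    intro r _
    rw [Finset.mem_Ico]
    exact ⟨Int.emod_nonneg _ (ne_of_gt hd), Int.emod_lt_of_pos _ hd⟩
  have hcard : (Finset.Ico (0:ℤ) d).card < (Finset.Icc (0:ℤ) d).card := by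
    rw [Int.card_Ico, Int.card_Icc]
    omega
  obtain ⟨r, hr, s, hs, hrs, heq⟩ :=
    Finset.exists_ne_map_eq_of_card_lt_of_maps_to hcard hmaps
  rcases hrs.lt_or_gt with h | h
  · exact claim r s hr hs h heq
  · exact claim s r hs hr h heq.symm

open Matrix

/-- **Integrality gap for the unbounded knapsack problem** (the case `m = 1`):
if `1 ≤ a_i ≤ Δ` for all `i`, `P = {x : aᵀx = β, x ≥ 0}` contains an integer point,
`x*` is LP-optimal and `z*` is an optimal integer point, then
`cᵀx* − cᵀz* ≤ 2·‖c‖_∞·Δ`, the norm on `Fin n → ℝ` being the maximum norm. -/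
theorem knapsack_integrality_gap
    (n : ℕ) (Δ : ℤ) (hΔ : 1 ≤ Δ)
    (a : Fin n → ℤ) (ha : ∀ i, 1 ≤ a i ∧ a i ≤ Δ)
    (β : ℤ) (hβ : 0 ≤ β) (c : Fin n → ℤ)
    (P : Set (Fin n → ℝ))
    (hP : P = {x : Fin n → ℝ | (∑ i, (a i : ℝ) * x i) = (β : ℝ) ∧ ∀ i, 0 ≤ x i})
    (hint : ∃ z : Fin n → ℤ, (fun i => (z i : ℝ)) ∈ P)
    (xstar : Fin n → ℝ) (hxP : xstar ∈ P)
    (hx_opt : ∀ x ∈ P, ∑ i, (c i : ℝ) * x i ≤ ∑ i, (c i : ℝ) * xstar i)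
    (zstar : Fin n → ℤ) (hzP : (fun i => (zstar i : ℝ)) ∈ P)
    (hz_opt : ∀ z : Fin n → ℤ, (fun i => (z i : ℝ)) ∈ P → c ⬝ᵥ z ≤ c ⬝ᵥ zstar) :
    (∑ i, (c i : ℝ) * xstar i) - ∑ i, (c i : ℝ) * (zstar i : ℝ) ≤
      2 * ‖(fun i : Fin n => (c i : ℝ))‖ * (Δ : ℝ) := by
  classical
  set M : ℝ := ‖(fun i : Fin n => (c i : ℝ))‖ with hM
  have hc0 : (0:ℝ) ≤ M := norm_nonneg _
  have hΔR : (1:ℝ) ≤ (Δ:ℝ) := by exact_mod_cast hΔ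
  have hK0 : (0:ℝ) ≤ 2 * M * (Δ:ℝ) := by nlinarith
  rcases Nat.eq_zero_or_pos n with hn0 | hn
  · subst hn0
    simpa using hK0
  -- choose the index with the best ratio c i / a i
  obtain ⟨j, -, hj⟩ := Finset.exists_max_image (Finset.univ : Finset (Fin n))
      (fun i => (c i : ℚ) / (a i : ℚ)) ⟨⟨0, hn⟩, Finset.mem_univ _⟩
  have haj : 0 < a j := lt_of_lt_of_le zero_lt_one (ha j).1
  have hajR : (0:ℝ) < (a j : ℝ) := by exact_mod_cast haj
  have hδ : ∀ i, c i * a j ≤ c j * a i := by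
    intro i
    have h1 : (0:ℚ) < (a i : ℚ) := by
      exact_mod_cast lt_of_lt_of_le zero_lt_one (ha i).1
    have h2 : (0:ℚ) < (a j : ℚ) := by exact_mod_cast haj
    have := hj i (Finset.mem_univ i)
    rw [div_le_div_iff₀ h1 h2] at this
    exact_mod_cast this
  rw [hP] at hxP hzP
  obtain ⟨hxe, hxn⟩ := hxP
  obtain ⟨hze', hzn'⟩ := hzP
  have hze : ∑ i, (a i : ℝ) * (zstar i : ℝ) = (β : ℝ) := hze'
  have hzn : ∀ i, (0:ℝ) ≤ (zstar i : ℝ) := hzn'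
  have hz0 : ∀ i, 0 ≤ zstar i := fun i => by exact_mod_cast hzn i
  have hzeZ : ∑ i, a i * zstar i = β := by exact_mod_cast hze
  have hcM : ∀ i, |(c i : ℝ)| ≤ M := by
    intro i
    simpa using norm_le_pi_norm (fun i : Fin n => (c i : ℝ)) i
  have haR : ∀ i, (1:ℝ) ≤ (a i : ℝ) ∧ (a i : ℝ) ≤ (Δ:ℝ) := by
    intro i
    constructor
    · exact_mod_cast (ha i).1
    · exact_mod_cast (ha i).2
  have hδub : ∀ i, ((c j * a i - c i * a j : ℤ) : ℝ) ≤ 2 * M * (Δ:ℝ) := by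
    intro i
    have h1 := abs_le.mp (hcM i)
    have h2 := abs_le.mp (hcM j)
    have h3 := haR i
    have h4 := haR j
    push_cast
    nlinarith [h1.1, h1.2, h2.1, h2.2, h3.1, h3.2, h4.1, h4.2]
  -- LP bound
  have hLP : ∑ i, (c i : ℝ) * xstar i ≤ (β : ℝ) * (c j : ℝ) / (a j : ℝ) := by
    calc ∑ i, (c i : ℝ) * xstar i
        ≤ ∑ i, ((c j : ℝ) * (a i : ℝ) / (a j : ℝ)) * xstar i := by
          refine Finset.sum_le_sum fun i _ => mul_le_mul_of_nonneg_right ?_ (hxn i)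
          rw [le_div_iff₀ hajR]
          exact_mod_cast hδ i
      _ = (c j : ℝ) / (a j : ℝ) * ∑ i, (a i : ℝ) * xstar i := by
          rw [Finset.mul_sum]
          exact Finset.sum_congr rfl fun i _ => by ring
      _ = (β : ℝ) * (c j : ℝ) / (a j : ℝ) := by rw [hxe]; ring
  -- key combinatorial claim : total multiplicity on "bad" indices is < a j
  set I : Finset (Fin n) := Finset.univ.filter (fun i => 0 < c j * a i - c i * a j) with hI
  have key : ∑ i ∈ I, zstar i ≤ a j - 1 := by
    by_contra hkey
    push_neg at hkey
    set w : Fin n → ℤ := fun i => if 0 < c j * a i - c i * a j then zstar i else 0 with hw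
    have hw0 : ∀ i, 0 ≤ w i := by
      intro i
      rw [hw]
      dsimp only
      split
      · exact hz0 i
      · exact le_rfl
    have hwz : ∀ i, w i ≤ zstar i := by
      intro i
      rw [hw]
      dsimp only
      split
      · exact le_rfl
      · exact hz0 i
    have hwsum : ∑ i, w i = ∑ i ∈ I, zstar i := by
      rw [hI, Finset.sum_filter]
    have hDw : a j ≤ ∑ i, w i := by
      rw [hwsum]
      omega
    obtain ⟨t, ht0, htw, htpos, hdvd⟩ :=
      knapsack_aux_exists n (a j) haj a w hw0 hDw
    have htz : ∀ i, t i ≤ zstar i := fun i => le_trans (htw i) (hwz i)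
    obtain ⟨k, hk⟩ := hdvd
    have hts_pos : 0 < ∑ i, a i * t i := by
      have hterm : ∀ i : Fin n, t i ≤ a i * t i := by
        intro i
        have h1 := ht0 i
        have h2 := (ha i).1
        nlinarith
      calc (0:ℤ) < ∑ i, t i := htpos
        _ ≤ ∑ i, a i * t i := Finset.sum_le_sum fun i _ => hterm i
    have hk1 : 1 ≤ k := by
      rcases le_or_gt k 0 with h | h
      · exfalso
        have : a j * k ≤ 0 := mul_nonpos_of_nonneg_of_nonpos (le_of_lt haj) h
        omega
      · omega
    set z' : Fin n → ℤ := fun i => zstar i - t i + (if i = j then k else 0) with hz'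
    have hz'0 : ∀ i, 0 ≤ z' i := by
      intro i
      have h1 := htz i
      have h2 := ht0 i
      rw [hz']
      dsimp only
      split <;> omega
    have hz'e : ∑ i, a i * z' i = β := by
      have h1 : ∑ i : Fin n, a i * (if i = j then k else 0) = a j * k := by
        simp [mul_ite]
      calc ∑ i, a i * z' i
          = ∑ i, (a i * zstar i - a i * t i + a i * (if i = j then k else 0)) := by
            exact Finset.sum_congr rfl fun i _ => by rw [hz']; ring
        _ = (∑ i, a i * zstar i) - (∑ i, a i * t i) +
              ∑ i : Fin n, a i * (if i = j then k else 0) := by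
            rw [Finset.sum_add_distrib, Finset.sum_sub_distrib]
        _ = β := by rw [h1, hzeZ, hk]; ring
    have hz'P : (fun i => ((z' i : ℤ) : ℝ)) ∈ P := by
      rw [hP]
      refine ⟨?_, fun i => ?_⟩
      · show ∑ i, (a i : ℝ) * ((z' i : ℤ) : ℝ) = (β : ℝ)
        exact_mod_cast hz'e
      · show (0:ℝ) ≤ ((z' i : ℤ) : ℝ)
        exact_mod_cast hz'0 i
    have hobj := hz_opt z' hz'P
    have hd : c ⬝ᵥ z' = c ⬝ᵥ zstar - (∑ i, c i * t i) + c j * k := by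
      have h1 : ∑ i : Fin n, c i * (if i = j then k else 0) = c j * k := by
        simp [mul_ite]
      calc c ⬝ᵥ z' = ∑ i, c i * z' i := rfl
        _ = ∑ i, (c i * zstar i - c i * t i + c i * (if i = j then k else 0)) := by
            exact Finset.sum_congr rfl fun i _ => by rw [hz']; ring
        _ = (∑ i, c i * zstar i) - (∑ i, c i * t i) +
              ∑ i : Fin n, c i * (if i = j then k else 0) := by
            rw [Finset.sum_add_distrib, Finset.sum_sub_distrib]
        _ = c ⬝ᵥ zstar - (∑ i, c i * t i) + c j * k := by rw [h1]; rfl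
    have hdelta : ∀ i : Fin n, t i ≤ t i * (c j * a i - c i * a j) := by
      intro i
      rcases eq_or_lt_of_le (ht0 i) with h | h
      · rw [← h]
        simp
      · have hwpos : 0 < w i := lt_of_lt_of_le h (htw i)
        have hdi : 0 < c j * a i - c i * a j := by
          by_contra hcon
          rw [hw] at hwpos
          dsimp only at hwpos
          rw [if_neg hcon] at hwpos
          omega
        nlinarith
    have e1 : a j * (c j * k - ∑ i, c i * t i) =
        ∑ i, t i * (c j * a i - c i * a j) := by
      rw [mul_sub, Finset.mul_sum,
        show a j * (c j * k) = c j * (a j * k) by ring, ← hk, Finset.mul_sum,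
        ← Finset.sum_sub_distrib]
      exact Finset.sum_congr rfl fun i _ => by ring
    have e2 : 0 < ∑ i, t i * (c j * a i - c i * a j) :=
      lt_of_lt_of_le htpos (Finset.sum_le_sum fun i _ => hdelta i)
    have e3 : 0 < c j * k - ∑ i, c i * t i := by
      by_contra hX
      push_neg at hX
      nlinarith
    rw [hd] at hobj
    linarith
  -- assemble the final bound
  have hGf : ∑ i, zstar i * (c j * a i - c i * a j) =
      ∑ i ∈ I, zstar i * (c j * a i - c i * a j) := by
    symm
    apply Finset.sum_subset (Finset.filter_subset _ _)
    intro i _ hiI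
    have h0 := hδ i
    have h1 : ¬ 0 < c j * a i - c i * a j := by simpa [hI] using hiI
    have h2 : c j * a i - c i * a j = 0 := by omega
    rw [h2, mul_zero]
  have hGle : ((∑ i, zstar i * (c j * a i - c i * a j) : ℤ) : ℝ) ≤
      (a j : ℝ) * (2 * M * Δ) := by
    rw [hGf]
    push_cast
    calc ∑ i ∈ I, (zstar i : ℝ) * ((c j : ℝ) * (a i : ℝ) - (c i : ℝ) * (a j : ℝ))
        ≤ ∑ i ∈ I, (zstar i : ℝ) * (2 * M * Δ) := by
          refine Finset.sum_le_sum fun i _ => mul_le_mul_of_nonneg_left ?_ ?_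
          · have := hδub i
            push_cast at this
            linarith
          · exact_mod_cast hz0 i
      _ = (∑ i ∈ I, (zstar i : ℝ)) * (2 * M * Δ) := by rw [← Finset.sum_mul]
      _ ≤ (a j : ℝ) * (2 * M * Δ) := by
          apply mul_le_mul_of_nonneg_right _ hK0
          have h1 : ((∑ i ∈ I, zstar i : ℤ) : ℝ) ≤ ((a j : ℤ) : ℝ) := by
            exact_mod_cast le_trans key (by omega)
          push_cast at h1
          exact h1
  have h2 : (β:ℝ) * (c j : ℝ) / (a j : ℝ) ≤ ∑ i, (c i : ℝ) * (zstar i : ℝ) + 2 * M * Δ := by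
    rw [div_le_iff₀ hajR]
    have expand : (β:ℝ) * (c j : ℝ) =
        (∑ i, (c i : ℝ) * (zstar i : ℝ)) * (a j : ℝ) +
          ((∑ i, zstar i * (c j * a i - c i * a j) : ℤ) : ℝ) := by
      push_cast
      rw [← hze, Finset.sum_mul, Finset.sum_mul, ← Finset.sum_add_distrib]
      exact Finset.sum_congr rfl fun i _ => by ring
    rw [expand]
    nlinarith [hGle]
  linarith [hLP, h2]
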